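/- arXiv:2304.02206 — 5 statements merged into one kernel-verified Lean document; each statement's English description precedes it below -/
import Mathlib

section
/- Let C be an oriented Hitomezashi path and let a be an integer. Then all edges of C lying on the vertical line x = a point in the same direction (all up or all down), and the y-coordinates of their starting vertices all have the same parity. -/
/-- The Hitomezashi pattern determined by sequences `ε η : ℤ → ZMod 2`:
horizontal edges `{(i,j),(i+1,j)}` when `i ≡ η j (mod 2)` and
vertical edges `{(i,j),(i,j+1)}` when `j ≡ ε i (mod 2)`. -/
def Hitomezashi (ε η : ℤ → ZMod 2) : SimpleGraph (ℤ × ℤ) :=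
  SimpleGraph.fromRel (fun v w =>
    (w = (v.1 + 1, v.2) ∧ (v.1 : ZMod 2) = η v.2) ∨
    (w = (v.1, v.2 + 1) ∧ (v.2 : ZMod 2) = ε v.1))

namespace HitoAux

variable {ε η : ℤ → ZMod 2}

lemma adj_cases {u v : ℤ × ℤ} (h : (Hitomezashi ε η).Adj u v) :
    (v = (u.1 + 1, u.2) ∧ (u.1 : ZMod 2) = η u.2) ∨
    (v = (u.1, u.2 + 1) ∧ (u.2 : ZMod 2) = ε u.1) ∨
    (u = (v.1 + 1, v.2) ∧ (v.1 : ZMod 2) = η v.2) ∨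
    (u = (v.1, v.2 + 1) ∧ (v.2 : ZMod 2) = ε v.1) := by
  rw [Hitomezashi, SimpleGraph.fromRel_adj] at h
  tauto

lemma dichotomy {u v : ℤ × ℤ} (h : (Hitomezashi ε η).Adj u v) :
    u.1 = v.1 ∨ u.2 = v.2 := by
  rcases adj_cases h with ⟨h1, _⟩ | ⟨h1, _⟩ | ⟨h1, _⟩ | ⟨h1, _⟩ <;>
    rw [Prod.ext_iff] at h1 <;> simp_all <;> omega

lemma vert_char {u v : ℤ × ℤ} (h : (Hitomezashi ε η).Adj u v) (hx : u.1 = v.1) :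
    (v.2 = u.2 + 1 ∧ (u.2 : ZMod 2) = ε u.1) ∨
    (u.2 = v.2 + 1 ∧ (v.2 : ZMod 2) = ε u.1) := by
  rcases adj_cases h with ⟨h1, h2⟩ | ⟨h1, h2⟩ | ⟨h1, h2⟩ | ⟨h1, h2⟩ <;>
    rw [Prod.ext_iff] at h1 <;> simp_all <;> omega

lemma horiz_char {u v : ℤ × ℤ} (h : (Hitomezashi ε η).Adj u v) (hy : u.2 = v.2) :
    (v.1 = u.1 + 1 ∧ (u.1 : ZMod 2) = η u.2) ∨
    (u.1 = v.1 + 1 ∧ (v.1 : ZMod 2) = η u.2) := by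
  rcases adj_cases h with ⟨h1, h2⟩ | ⟨h1, h2⟩ | ⟨h1, h2⟩ | ⟨h1, h2⟩ <;>
    rw [Prod.ext_iff] at h1 <;> simp_all <;> omega

lemma cast_succ (n : ℤ) : ((n + 1 : ℤ) : ZMod 2) = (n : ZMod 2) + 1 := by push_cast; ring

lemma vert_unique {w u z : ℤ × ℤ} (h1 : (Hitomezashi ε η).Adj w u)
    (h2 : (Hitomezashi ε η).Adj w z) (hx1 : w.1 = u.1) (hx2 : w.1 = z.1) : u = z := by
  rcases vert_char h1 hx1 with ⟨e1, e2⟩ | ⟨e1, e2⟩ <;>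
    rcases vert_char h2 hx2 with ⟨f1, f2⟩ | ⟨f1, f2⟩
  · exact Prod.ext (hx1.symm.trans hx2) (by omega)
  · exfalso
    have : ((z.2 : ℤ) : ZMod 2) = (w.2 : ZMod 2) := f2.trans e2.symm
    rw [show (z.2 : ℤ) = w.2 - 1 by omega] at this
    push_cast at this
    simpa using this
  · exfalso
    have : ((u.2 : ℤ) : ZMod 2) = (w.2 : ZMod 2) := e2.trans f2.symm
    rw [show (u.2 : ℤ) = w.2 - 1 by omega] at this
    push_cast at this
    simpa using this
  · exact Prod.ext (hx1.symm.trans hx2) (by omega)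

lemma horiz_unique {w u z : ℤ × ℤ} (h1 : (Hitomezashi ε η).Adj w u)
    (h2 : (Hitomezashi ε η).Adj w z) (hy1 : w.2 = u.2) (hy2 : w.2 = z.2) : u = z := by
  rcases horiz_char h1 hy1 with ⟨e1, e2⟩ | ⟨e1, e2⟩ <;>
    rcases horiz_char h2 hy2 with ⟨f1, f2⟩ | ⟨f1, f2⟩
  · exact Prod.ext (by omega) (hy1.symm.trans hy2)
  · exfalso
    have : ((z.1 : ℤ) : ZMod 2) = (w.1 : ZMod 2) := f2.trans e2.symm
    rw [show (z.1 : ℤ) = w.1 - 1 by omega] at this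
    push_cast at this
    simpa using this
  · exfalso
    have : ((u.1 : ℤ) : ZMod 2) = (w.1 : ZMod 2) := e2.trans f2.symm
    rw [show (u.1 : ℤ) = w.1 - 1 by omega] at this
    push_cast at this
    simpa using this
  · exact Prod.ext (by omega) (hy1.symm.trans hy2)

lemma step {u w z : ℤ × ℤ} (h1 : (Hitomezashi ε η).Adj u w)
    (h2 : (Hitomezashi ε η).Adj w z) (hne : u ≠ z) :
    (u.1 : ZMod 2) + (w.2 : ZMod 2) = (w.1 : ZMod 2) + (z.2 : ZMod 2) := by
  rcases dichotomy h1 with hv1 | hh1 <;> rcases dichotomy h2 with hv2 | hh2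
  · exact absurd (vert_unique h1.symm h2 hv1.symm hv2) hne
  · rw [hv1, hh2]
  · -- u horiz w? no: hh1 : u.2 = w.2 means horizontal; hv2 : w.1 = z.1 vertical
    have key : ∀ m n : ℤ, (m = n + 1 ∨ n = m + 1) → (m : ZMod 2) = (n : ZMod 2) + 1 := by
      rintro m n (rfl | rfl)
      · push_cast; ring
      · push_cast
        have : ∀ x : ZMod 2, x = x + 1 + 1 := by decide
        exact this _
    have hu : (u.1 : ZMod 2) = (w.1 : ZMod 2) + 1 := by
      rcases horiz_char h1 hh1 with ⟨e1, _⟩ | ⟨e1, _⟩ <;> exact key _ _ (by omega)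
    have hz : (z.2 : ZMod 2) = (w.2 : ZMod 2) + 1 := by
      rcases vert_char h2 hv2 with ⟨f1, _⟩ | ⟨f1, _⟩ <;> exact key _ _ (by omega)
    rw [hu, hz]; ring
  · exact absurd (horiz_unique h1.symm h2 hh1.symm hh2) hne

end HitoAux

namespace HitoAux

open SimpleGraph Walk

lemma head_eq : ∀ {u v w : ℤ × ℤ} (h : (Hitomezashi ε η).Adj u v)
    (p : (Hitomezashi ε η).Walk v w), (Walk.cons h p).IsPath →
    ∀ e ∈ p.darts, (u.1 : ZMod 2) + (v.2 : ZMod 2) = (e.fst.1 : ZMod 2) + (e.snd.2 : ZMod 2) := by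
  intro u v w h p
  induction p generalizing u with
  | nil => intro _ e he; simp at he
  | @cons v' z w' h' q ih =>
    intro hp e he
    have hnd := hp.support_nodup
    rw [Walk.support_cons, Walk.support_cons] at hnd
    have huz : u ≠ z := by
      intro hh
      exact (List.nodup_cons.mp hnd).1
        (by rw [hh]; exact List.mem_cons_of_mem _ q.start_mem_support)
    have key : (u.1 : ZMod 2) + (v'.2 : ZMod 2) = (v'.1 : ZMod 2) + (z.2 : ZMod 2) :=
      step h h' huz
    rw [Walk.darts_cons, List.mem_cons] at he
    rcases he with rfl | he
    · exact key
    · exact key.trans (ih h' hp.of_cons e he)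

lemma darts_J_eq {u v : ℤ × ℤ} (p : (Hitomezashi ε η).Walk u v) :
    p.IsPath → ∀ d ∈ p.darts, ∀ e ∈ p.darts,
      (d.fst.1 : ZMod 2) + (d.snd.2 : ZMod 2) = (e.fst.1 : ZMod 2) + (e.snd.2 : ZMod 2) := by
  induction p with
  | nil => intro _ d hd; simp at hd
  | cons h q ih =>
    intro hp d hd e he
    rw [Walk.darts_cons, List.mem_cons] at hd he
    rcases hd with rfl | hd <;> rcases he with rfl | he
    · rfl
    · exact head_eq h q hp e he
    · exact (head_eq h q hp d hd).symm
    · exact ih hp.of_cons d hd e he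

end HitoAux


/-- All edges of a Hitomezashi path on a vertical line `x = a` point in the same
direction, and the `y`-coordinates of their starting vertices have the same parity. -/
theorem hitomezashi_vertical_direction (ε η : ℤ → ZMod 2) {u v : ℤ × ℤ}
    (p : (Hitomezashi ε η).Walk u v) (hp : p.IsPath) (a : ℤ)
    (d d' : (Hitomezashi ε η).Dart) (hd : d ∈ p.darts) (hd' : d' ∈ p.darts)
    (hda : d.fst.1 = a ∧ d.snd.1 = a) (hd'a : d'.fst.1 = a ∧ d'.snd.1 = a) :
    (d.snd.2 = d.fst.2 + 1 ↔ d'.snd.2 = d'.fst.2 + 1) ∧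
      d.fst.2 ≡ d'.fst.2 [ZMOD 2] := by
  have hJ := HitoAux.darts_J_eq p hp d hd d' hd'
  rw [hda.1, hd'a.1] at hJ
  have hsnd : ((d.snd.2 : ℤ) : ZMod 2) = ((d'.snd.2 : ℤ) : ZMod 2) :=
    add_left_cancel hJ
  have hc := HitoAux.vert_char d.adj (hda.1.trans hda.2.symm)
  have hc' := HitoAux.vert_char d'.adj (hd'a.1.trans hd'a.2.symm)
  rw [hda.1] at hc
  rw [hd'a.1] at hc'
  have cast_mod : ∀ m n : ℤ, ((m : ZMod 2) = (n : ZMod 2)) → m ≡ n [ZMOD 2] := by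
    intro m n hmn
    have := (ZMod.intCast_eq_intCast_iff m n 2).mp hmn
    simpa using this
  rcases hc with ⟨h1, h2⟩ | ⟨h1, h2⟩ <;> rcases hc' with ⟨k1, k2⟩ | ⟨k1, k2⟩
  · refine ⟨iff_of_true h1 k1, cast_mod _ _ ?_⟩
    exact h2.trans k2.symm
  · exfalso
    have e1 : ((d.snd.2 : ℤ) : ZMod 2) = ε a + 1 := by
      rw [h1]; push_cast; rw [h2]
    have : ε a + 1 = ε a := by rw [← e1, hsnd, k2]
    simpa using this
  · exfalso
    have e1 : ((d'.snd.2 : ℤ) : ZMod 2) = ε a + 1 := by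
      rw [k1]; push_cast; rw [k2]
    have : ε a + 1 = ε a := by rw [← e1, ← hsnd, h2]
    simpa using this
  · refine ⟨iff_of_false (by omega) (by omega), cast_mod _ _ ?_⟩
    rw [h1, k1]; push_cast; rw [hsnd]
end

section
/- Let P and Q be two vertex-disjoint lattice paths in the half-plane H_a = {(x,y) : x ≥ a}, where P connects (a, y1) to (a, y3) and Q connects (a, y2) to (a, y4). Then it is not possible that y1 ≤ y2 ≤ y3 ≤ y4. -/
namespace DLPaux

lemma z2_add_eq_zero {u v : ZMod 2} : u + v = 0 ↔ u = v := by revert u v; decide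
lemma z2_add_self (u : ZMod 2) : u + u = 0 := by revert u; decide

def vind (p p' q : ℤ × ℤ) : ZMod 2 :=
  if p.1 = p'.1 ∧ p.1 < q.1 ∧ ((p.2 = q.2 - 1 ∧ p'.2 = q.2) ∨ (p.2 = q.2 ∧ p'.2 = q.2 - 1))
  then 1 else 0

def gind (p q : ℤ × ℤ) : ZMod 2 := if p.1 < q.1 ∧ p.2 = q.2 then 1 else 0

lemma step_h (px py qx qy x y : ℤ) (hp : ¬(px = x ∧ py = y)) (hq : ¬(qx = x ∧ qy = y)) :
    vind (px,py) (qx,qy) (x+1, y) = vind (px,py) (qx,qy) (x, y) := by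
  unfold vind; dsimp only
  split_ifs <;> first | rfl | (exfalso; omega)

lemma step_v (px py qx qy x y : ℤ)
    (h : |qx - px| + |qy - py| = 1)
    (hp : ¬(px = x ∧ py = y)) (hq : ¬(qx = x ∧ qy = y)) :
    vind (px,py) (qx,qy) (x, y+1) + vind (px,py) (qx,qy) (x, y)
      = gind (px,py) (x,y) + gind (qx,qy) (x,y) := by
  rw [Int.abs_eq_natAbs, Int.abs_eq_natAbs] at h
  unfold vind gind; dsimp only
  split_ifs <;> first | decide | (exfalso; omega)

lemma telescope : ∀ {m : ℕ} (f : Fin (m+1) → ZMod 2),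
    ∑ k : Fin m, (f k.castSucc + f k.succ) = f 0 + f (Fin.last m) := by
  intro m
  induction m with
  | zero =>
    intro f
    simp [(z2_add_self (f 0)).symm, Fin.last]
  | succ m ih =>
    intro f
    rw [Fin.sum_univ_castSucc]
    have e : ∀ k : Fin m, f (k.castSucc).castSucc + f (k.castSucc).succ
        = (fun i : Fin (m+1) => f i.castSucc) k.castSucc
          + (fun i : Fin (m+1) => f i.castSucc) k.succ := by
      intro k; dsimp only; rw [Fin.succ_castSucc]
    rw [Finset.sum_congr rfl (fun k _ => e k), ih (fun i => f i.castSucc)]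
    rw [Fin.castSucc_zero, Fin.succ_last]
    have : ∀ u v w : ZMod 2, (u + v) + (v + w) = u + w := by decide
    exact this _ _ _

/-- the winding parity: crossings of the leftward ray at height `q.2 - 1/2`
with the path `P`, plus crossings with the closing curve through `x = a - 1`. -/
def Fw (a y1 y3 : ℤ) (m : ℕ) (P : Fin (m+1) → ℤ × ℤ) (q : ℤ × ℤ) : ZMod 2 :=
  (∑ k : Fin m, vind (P k.castSucc) (P k.succ) q) +
    (if a - 1 < q.1 ∧ y1 < q.2 ∧ q.2 ≤ y3 then 1 else 0)

lemma Fw_moveH (a y1 y3 : ℤ) (m : ℕ) (P : Fin (m+1) → ℤ × ℤ)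
    (x y : ℤ) (hax : a ≤ x) (hnp : ∀ k, P k ≠ (x, y)) :
    Fw a y1 y3 m P (x + 1, y) = Fw a y1 y3 m P (x, y) := by
  unfold Fw
  have hs : ∀ k : Fin m, vind (P k.castSucc) (P k.succ) (x+1, y)
      = vind (P k.castSucc) (P k.succ) (x, y) := by
    intro k
    have hp : ¬((P k.castSucc).1 = x ∧ (P k.castSucc).2 = y) := by
      rintro ⟨h1, h2⟩; exact hnp k.castSucc (Prod.ext h1 h2)
    have hq : ¬((P k.succ).1 = x ∧ (P k.succ).2 = y) := by
      rintro ⟨h1, h2⟩; exact hnp k.succ (Prod.ext h1 h2)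
    have := step_h (P k.castSucc).1 (P k.castSucc).2 (P k.succ).1 (P k.succ).2 x y hp hq
    simpa using this
  rw [Finset.sum_congr rfl (fun k _ => hs k)]
  congr 1
  apply if_congr _ rfl rfl
  constructor
  · rintro ⟨_, h2⟩; exact ⟨by omega, h2⟩
  · rintro ⟨_, h2⟩; exact ⟨by omega, h2⟩

lemma Fw_moveV (a y1 y3 : ℤ) (m : ℕ) (P : Fin (m+1) → ℤ × ℤ)
    (hP : ∀ k : Fin m, |(P k.succ).1 - (P k.castSucc).1| + |(P k.succ).2 - (P k.castSucc).2| = 1)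
    (hP0 : P 0 = (a, y1)) (hP1 : P (Fin.last m) = (a, y3)) (h13 : y1 ≤ y3)
    (x y : ℤ) (hax : a ≤ x) (hnp : ∀ k, P k ≠ (x, y)) :
    Fw a y1 y3 m P (x, y + 1) = Fw a y1 y3 m P (x, y) := by
  rw [← z2_add_eq_zero]
  unfold Fw
  have hk : ∀ k : Fin m, vind (P k.castSucc) (P k.succ) (x, y+1)
      + vind (P k.castSucc) (P k.succ) (x, y)
      = gind (P k.castSucc) (x, y) + gind (P k.succ) (x, y) := by
    intro k
    have hp : ¬((P k.castSucc).1 = x ∧ (P k.castSucc).2 = y) := by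
      rintro ⟨h1, h2⟩; exact hnp k.castSucc (Prod.ext h1 h2)
    have hq : ¬((P k.succ).1 = x ∧ (P k.succ).2 = y) := by
      rintro ⟨h1, h2⟩; exact hnp k.succ (Prod.ext h1 h2)
    have := step_v (P k.castSucc).1 (P k.castSucc).2 (P k.succ).1 (P k.succ).2 x y
      (hP k) hp hq
    simpa using this
  have hS : (∑ k : Fin m, vind (P k.castSucc) (P k.succ) (x, y+1))
      + (∑ k : Fin m, vind (P k.castSucc) (P k.succ) (x, y))
      = gind (P 0) (x, y) + gind (P (Fin.last m)) (x, y) := by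
    rw [← Finset.sum_add_distrib, Finset.sum_congr rfl (fun k _ => hk k)]
    exact telescope (fun i => gind (P i) (x, y))
  have hne1 : ¬(x = a ∧ y = y1) := by
    rintro ⟨rfl, rfl⟩; exact hnp 0 hP0
  have hne3 : ¬(x = a ∧ y = y3) := by
    rintro ⟨rfl, rfl⟩; exact hnp (Fin.last m) hP1
  have rearr : ∀ S1 c1 S0 c0 : ZMod 2, (S1 + c1) + (S0 + c0) = (S1 + S0) + (c1 + c0) := by
    decide
  rw [rearr, hS, hP0, hP1]
  unfold gind
  dsimp only
  split_ifs <;> first | decide | (exfalso; omega)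

end DLPaux

/-- Two vertex-disjoint lattice paths in the half-plane `{x ≥ a}`, one from `(a, y1)`
to `(a, y3)` and the other from `(a, y2)` to `(a, y4)`, cannot satisfy
`y1 ≤ y2 ≤ y3 ≤ y4`. -/
theorem disjoint_lattice_paths (a y1 y2 y3 y4 : ℤ) (m n : ℕ)
    (P : Fin (m + 1) → ℤ × ℤ) (Q : Fin (n + 1) → ℤ × ℤ)
    (hP : ∀ k : Fin m, |(P k.succ).1 - (P k.castSucc).1| + |(P k.succ).2 - (P k.castSucc).2| = 1)
    (hQ : ∀ k : Fin n, |(Q k.succ).1 - (Q k.castSucc).1| + |(Q k.succ).2 - (Q k.castSucc).2| = 1)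
    (hPa : ∀ k, a ≤ (P k).1) (hQa : ∀ k, a ≤ (Q k).1)
    (hdisj : ∀ k l, P k ≠ Q l)
    (hP0 : P 0 = (a, y1)) (hP1 : P (Fin.last m) = (a, y3))
    (hQ0 : Q 0 = (a, y2)) (hQ1 : Q (Fin.last n) = (a, y4)) :
    ¬(y1 ≤ y2 ∧ y2 ≤ y3 ∧ y3 ≤ y4) := by
  rintro ⟨h12, h23, h34⟩
  have h13 : y1 ≤ y3 := le_trans h12 h23
  have h12' : y1 < y2 := lt_of_le_of_ne h12 (by
    intro h; exact hdisj 0 0 (by rw [hP0, hQ0, h]))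
  have h34' : y3 < y4 := lt_of_le_of_ne h34 (by
    intro h; exact hdisj (Fin.last m) (Fin.last n) (by rw [hP1, hQ1, h]))
  -- F := DLPaux.Fw a y1 y3 m P is constant along Q
  have hconst : ∀ k : Fin (n+1), DLPaux.Fw a y1 y3 m P (Q k) = DLPaux.Fw a y1 y3 m P (Q 0) := by
    intro k
    induction k using Fin.induction with
    | zero => rfl
    | succ i ih =>
      rw [← ih]
      have h := hQ i
      rw [Int.abs_eq_natAbs, Int.abs_eq_natAbs] at h
      have hxq : a ≤ (Q i.castSucc).1 := hQa _
      have hxq' : a ≤ (Q i.succ).1 := hQa _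
      have hnpq : ∀ k, P k ≠ ((Q i.castSucc).1, (Q i.castSucc).2) :=
        fun k => hdisj k i.castSucc
      have hnpq' : ∀ k, P k ≠ ((Q i.succ).1, (Q i.succ).2) :=
        fun k => hdisj k i.succ
      have hcases : ((Q i.succ).1 = (Q i.castSucc).1 + 1 ∧ (Q i.succ).2 = (Q i.castSucc).2)
          ∨ ((Q i.castSucc).1 = (Q i.succ).1 + 1 ∧ (Q i.castSucc).2 = (Q i.succ).2)
          ∨ ((Q i.succ).1 = (Q i.castSucc).1 ∧ (Q i.succ).2 = (Q i.castSucc).2 + 1)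
          ∨ ((Q i.castSucc).1 = (Q i.succ).1 ∧ (Q i.castSucc).2 = (Q i.succ).2 + 1) := by
        omega
      rcases hcases with h1 | h1 | h1 | h1
      · have he : Q i.succ = ((Q i.castSucc).1 + 1, (Q i.castSucc).2) := Prod.ext h1.1 h1.2
        rw [he]
        exact DLPaux.Fw_moveH a y1 y3 m P _ _ hxq hnpq
      · have he : Q i.castSucc = ((Q i.succ).1 + 1, (Q i.succ).2) := Prod.ext h1.1 h1.2
        rw [he]
        exact (DLPaux.Fw_moveH a y1 y3 m P _ _ hxq' hnpq').symm
      · have he : Q i.succ = ((Q i.castSucc).1, (Q i.castSucc).2 + 1) := Prod.ext h1.1 h1.2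
        rw [he]
        exact DLPaux.Fw_moveV a y1 y3 m P hP hP0 hP1 h13 _ _ hxq hnpq
      · have he : Q i.castSucc = ((Q i.succ).1, (Q i.succ).2 + 1) := Prod.ext h1.1 h1.2
        rw [he]
        exact (DLPaux.Fw_moveV a y1 y3 m P hP hP0 hP1 h13 _ _ hxq' hnpq').symm
  have hval : ∀ y : ℤ, DLPaux.Fw a y1 y3 m P (a, y) = if y1 < y ∧ y ≤ y3 then 1 else 0 := by
    intro y
    unfold DLPaux.Fw
    have hz : ∀ k : Fin m, DLPaux.vind (P k.castSucc) (P k.succ) (a, y) = 0 := by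
      intro k
      unfold DLPaux.vind
      rw [if_neg]
      rintro ⟨-, h2, -⟩
      exact absurd h2 (not_lt.mpr (hPa k.castSucc))
    rw [Finset.sum_congr rfl (fun k _ => hz k), Finset.sum_const_zero, zero_add]
    apply if_congr _ rfl rfl
    constructor
    · rintro ⟨-, h2⟩; exact h2
    · intro h2; exact ⟨by omega, h2⟩
  have e := hconst (Fin.last n)
  rw [hQ1, hQ0, hval y4, hval y2] at e
  rw [if_neg (by omega), if_pos ⟨h12', h23⟩] at e
  exact absurd e (by decide)
end

section
/- Every Hitomezashi a-excursion has odd length. More precisely, an a-excursion from (a−1, i) to (a−1, j) has i ≢ j (mod 2) and odd length. -/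
/-- A Hitomezashi `a`-excursion: a path with at least three vertices whose first and
last vertices lie on the line `x = a - 1` and whose other vertices lie in `{x ≥ a}`. -/
def IsExcursion (ε η : ℤ → ZMod 2) (a : ℤ) {u v : ℤ × ℤ}
    (p : (Hitomezashi ε η).Walk u v) : Prop :=
  p.IsPath ∧ 3 ≤ p.support.length ∧ u.1 = a - 1 ∧ v.1 = a - 1 ∧
    ∀ w ∈ p.support.tail.dropLast, a ≤ w.1

/-!
Every vertex of a Hitomezashi pattern has exactly one horizontal neighbour `horizNbr η v` and
exactly one vertical neighbour `vertNbr ε v`, and both maps are involutions. Hence a path never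
takes two horizontal or two vertical steps in a row. An excursion starts and ends with a
horizontal step, so it has length `2k + 1` and ends at `horizNbr η (zigzag^[k] u)`, where
`zigzag = vertNbr ε ∘ horizNbr η` changes both coordinates by `±1`. Comparing first coordinates
modulo 2 forces `k` to be odd, and then the second coordinates of the endpoints differ by `k`.
-/

namespace SimpleGraph.Walk

variable {V : Type*} {G : SimpleGraph V} {u v : V}

lemma getVert_mem_tail_dropLast_support (p : G.Walk u v) {k : ℕ} (hk₀ : 0 < k)
    (hk : k < p.length) : p.getVert k ∈ p.support.tail.dropLast := by
  have hi : k - 1 < p.support.tail.dropLast.length := by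
    simp only [List.length_dropLast, List.length_tail, length_support]
    omega
  convert List.getElem_mem hi using 1
  rw [List.getElem_dropLast, List.getElem_tail, getVert_eq_support_getElem p hk.le]
  congr 1
  omega

end SimpleGraph.Walk

lemma ZMod.add_one_eq_iff_ne {t c : ZMod 2} : t + 1 = c ↔ t ≠ c := by
  revert t c
  decide

namespace Hitomezashi

open SimpleGraph Walk

/-- The stitches `{n, n + 1}` with `n ≡ c (mod 2)` pair off `ℤ`; `partner c n` is the other end
of the stitch at `n`. -/
def partner (c : ZMod 2) (n : ℤ) : ℤ := if (n : ZMod 2) = c then n + 1 else n - 1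

lemma intCast_partner (c : ZMod 2) (n : ℤ) : (partner c n : ZMod 2) = n + 1 := by
  unfold partner
  split_ifs
  · push_cast
    rfl
  · push_cast
    exact CharTwo.sub_eq_add _ _

lemma eq_partner_iff {c : ZMod 2} {m n : ℤ} :
    m = partner c n ↔ (m = n + 1 ∧ (n : ZMod 2) = c) ∨ (n = m + 1 ∧ (m : ZMod 2) = c) := by
  unfold partner
  split_ifs with h
  · refine ⟨fun hm => Or.inl ⟨hm, h⟩, ?_⟩
    rintro (⟨hm, -⟩ | ⟨rfl, hm⟩)
    · exact hm
    · push_cast at h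
      exact absurd hm (ZMod.add_one_eq_iff_ne.mp h)
  · refine ⟨fun hm => Or.inr ⟨by omega, ?_⟩, ?_⟩
    · rw [hm, Int.cast_sub, Int.cast_one, CharTwo.sub_eq_add, ZMod.add_one_eq_iff_ne]
      exact h
    · rintro (⟨-, hn⟩ | ⟨rfl, -⟩)
      · exact absurd hn h
      · simp

variable {ε η : ℤ → ZMod 2}

def horizNbr (η : ℤ → ZMod 2) (v : ℤ × ℤ) : ℤ × ℤ := (partner (η v.2) v.1, v.2)

def vertNbr (ε : ℤ → ZMod 2) (v : ℤ × ℤ) : ℤ × ℤ := (v.1, partner (ε v.1) v.2)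

lemma eq_horizNbr_iff {v w : ℤ × ℤ} : w = horizNbr η v ↔
    (w = (v.1 + 1, v.2) ∧ (v.1 : ZMod 2) = η v.2) ∨
    (v = (w.1 + 1, w.2) ∧ (w.1 : ZMod 2) = η w.2) := by
  obtain ⟨x, y⟩ := v
  obtain ⟨x', y'⟩ := w
  rcases eq_or_ne y' y with rfl | hy
  · simp [horizNbr, eq_partner_iff]
  · simp [horizNbr, hy, hy.symm]

lemma eq_vertNbr_iff {v w : ℤ × ℤ} : w = vertNbr ε v ↔
    (w = (v.1, v.2 + 1) ∧ (v.2 : ZMod 2) = ε v.1) ∨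
    (v = (w.1, w.2 + 1) ∧ (w.2 : ZMod 2) = ε w.1) := by
  obtain ⟨x, y⟩ := v
  obtain ⟨x', y'⟩ := w
  rcases eq_or_ne x' x with rfl | hx
  · simp [vertNbr, eq_partner_iff]
  · simp [vertNbr, hx, hx.symm]

lemma eq_horizNbr_comm {v w : ℤ × ℤ} : w = horizNbr η v ↔ v = horizNbr η w := by
  rw [eq_horizNbr_iff, eq_horizNbr_iff, or_comm]

lemma eq_vertNbr_comm {v w : ℤ × ℤ} : w = vertNbr ε v ↔ v = vertNbr ε w := by
  rw [eq_vertNbr_iff, eq_vertNbr_iff, or_comm]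

lemma adj_iff {v w : ℤ × ℤ} :
    (Hitomezashi ε η).Adj v w ↔ w = horizNbr η v ∨ w = vertNbr ε v := by
  rw [Hitomezashi, fromRel_adj, eq_horizNbr_iff, eq_vertNbr_iff]
  constructor
  · rintro ⟨-, (h | h) | (h | h)⟩ <;> tauto
  · intro h
    refine ⟨?_, by tauto⟩
    rintro rfl
    rcases h with (⟨h, -⟩ | ⟨h, -⟩) | (⟨h, -⟩ | ⟨h, -⟩) <;> simp [Prod.ext_iff] at h

lemma intCast_horizNbr_fst (v : ℤ × ℤ) : ((horizNbr η v).1 : ZMod 2) = v.1 + 1 :=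
  intCast_partner _ _

lemma intCast_vertNbr_snd (v : ℤ × ℤ) : ((vertNbr ε v).2 : ZMod 2) = v.2 + 1 :=
  intCast_partner _ _

lemma horizNbr_ne_self (v : ℤ × ℤ) : horizNbr η v ≠ v := by
  intro h
  have h1 := intCast_horizNbr_fst (η := η) v
  rw [h, left_eq_add] at h1
  exact one_ne_zero h1

lemma horizNbr_ne_vertNbr (v : ℤ × ℤ) : horizNbr η v ≠ vertNbr ε v := fun h =>
  horizNbr_ne_self (η := η) v (Prod.ext (congrArg Prod.fst h :) rfl)

lemma eq_horizNbr_of_adj_of_fst_ne {v w : ℤ × ℤ} (h : (Hitomezashi ε η).Adj v w)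
    (hne : v.1 ≠ w.1) : w = horizNbr η v :=
  (adj_iff.mp h).resolve_right fun hw => hne (by rw [hw]; rfl)

def zigzag (ε η : ℤ → ZMod 2) (v : ℤ × ℤ) : ℤ × ℤ := vertNbr ε (horizNbr η v)

lemma intCast_zigzag (v : ℤ × ℤ) :
    ((zigzag ε η v).1 : ZMod 2) = v.1 + 1 ∧ ((zigzag ε η v).2 : ZMod 2) = v.2 + 1 :=
  ⟨intCast_horizNbr_fst v, intCast_vertNbr_snd _⟩

lemma intCast_zigzag_iterate (k : ℕ) (v : ℤ × ℤ) :
    (((zigzag ε η)^[k] v).1 : ZMod 2) = v.1 + k ∧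
      (((zigzag ε η)^[k] v).2 : ZMod 2) = v.2 + k := by
  induction k with
  | zero => simp
  | succ k ih =>
    rw [Function.iterate_succ_apply', (intCast_zigzag _).1, (intCast_zigzag _).2, ih.1, ih.2]
    push_cast
    constructor <;> ring

lemma exists_zigzag_of_isPath : ∀ {u v : ℤ × ℤ} (p : (Hitomezashi ε η).Walk u v),
    p.IsPath → p.snd = horizNbr η u → p.penultimate = horizNbr η v →
    ∃ k, p.length = 2 * k + 1 ∧ v = horizNbr η ((zigzag ε η)^[k] u)
  | _, _, .nil, _, hsnd, _ => (horizNbr_ne_self _ hsnd.symm).elim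
  | _, _, .cons _ .nil, _, hsnd, _ => ⟨0, rfl, hsnd⟩
  | u, v, .cons (v := w) h₁ (.cons (v := w') h₂ q), hp, hsnd, hpen => by
    rw [snd_cons] at hsnd
    have hw' : w' = vertNbr ε w := by
      refine (adj_iff.mp h₂).resolve_left fun hw' => ?_
      have hu : u = w' := (eq_horizNbr_comm.mp hsnd).trans hw'.symm
      exact ((cons_isPath_iff _ _).mp hp).2 (by simp [hu])
    have hq : ¬ q.Nil := by
      intro hq
      obtain rfl := hq.eq
      obtain rfl := eq_nil_iff_nil.mpr hq
      exact horizNbr_ne_vertNbr w ((eq_horizNbr_comm.mp hpen).symm.trans hw')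
    have hqsnd : q.snd = horizNbr η w' := by
      refine (adj_iff.mp (adj_snd hq)).resolve_right fun h => ?_
      rw [← eq_vertNbr_comm.mp hw'] at h
      exact ((cons_isPath_iff _ _).mp hp.of_cons).2 (h ▸ q.getVert_mem_support 1)
    have hqpen : q.penultimate = horizNbr η v := by
      rwa [penultimate_cons_cons, penultimate_cons_of_not_nil _ _ hq] at hpen
    obtain ⟨k, hk, hv⟩ := exists_zigzag_of_isPath q hp.of_cons.of_cons hqsnd hqpen
    refine ⟨k + 1, by rw [length_cons, length_cons, hk]; ring, ?_⟩
    rw [hv, Function.iterate_succ_apply, zigzag, ← hsnd, ← hw']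

end Hitomezashi

open Hitomezashi SimpleGraph Walk

lemma IsExcursion.exists_zigzag {ε η : ℤ → ZMod 2} {a : ℤ} {u v : ℤ × ℤ}
    {p : (Hitomezashi ε η).Walk u v} (h : IsExcursion ε η a p) :
    ∃ k, p.length = 2 * k + 1 ∧ v = horizNbr η ((zigzag ε η)^[k] u) := by
  obtain ⟨hpath, hlen, hu, hv, hint⟩ := h
  rw [length_support] at hlen
  have hnil : ¬ p.Nil := by rw [← length_eq_zero_iff]; omega
  have hsnd : a ≤ p.snd.1 := hint _ (p.getVert_mem_tail_dropLast_support one_pos (by omega))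
  have hpen : a ≤ p.penultimate.1 :=
    hint _ (p.getVert_mem_tail_dropLast_support (k := p.length - 1) (by omega) (by omega))
  exact exists_zigzag_of_isPath p hpath
    (eq_horizNbr_of_adj_of_fst_ne (adj_snd hnil) (by omega))
    (eq_horizNbr_comm.mp (eq_horizNbr_of_adj_of_fst_ne (adj_penultimate hnil) (by omega)))

/-- An `a`-excursion from `(a-1, i)` to `(a-1, j)` has `i ≢ j (mod 2)` and odd length. -/
theorem hitomezashi_excursion_odd (ε η : ℤ → ZMod 2) (a i j : ℤ)
    (p : (Hitomezashi ε η).Walk (a - 1, i) (a - 1, j)) (h : IsExcursion ε η a p) :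
    ¬ i ≡ j [ZMOD 2] ∧ Odd p.length := by
  obtain ⟨k, hk, hj⟩ := h.exists_zigzag
  have hx : ((a - 1 : ℤ) : ZMod 2) = (a - 1 : ℤ) + k + 1 :=
    (congrArg (fun v : ℤ × ℤ => (v.1 : ZMod 2)) hj).trans <|
      (intCast_horizNbr_fst _).trans <| congrArg (· + 1) (intCast_zigzag_iterate k _).1
  have hy : (j : ZMod 2) = i + k :=
    (congrArg (fun v : ℤ × ℤ => (v.2 : ZMod 2)) hj).trans (intCast_zigzag_iterate k _).2
  have hk1 : (k : ZMod 2) + 1 = 0 := by rwa [add_assoc, left_eq_add] at hx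
  refine ⟨fun hij => ?_, hk ▸ odd_two_mul_add_one k⟩
  rw [← (ZMod.intCast_eq_intCast_iff i j 2).mpr hij, left_eq_add] at hy
  rw [hy, zero_add] at hk1
  exact one_ne_zero hk1
end

section
/- Let L be a Hitomezashi loop, let a be the minimum x-coordinate of its vertices, and orient L so that all its edges on the line x = a point in the negative y-direction. If y_0 > y_1, ..., y_{t−1} are the starting y-coordinates of the edges of L on the line x = a where y_0 is the largest, listed in the order they are traversed, then y_0 > y_1 > ... > y_{t−1}. -/
def IsDartChain {V : Type*} : V → List (V × V) → V → Prop
  | u, [], w => u = w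
  | u, d :: L, w => d.1 = u ∧ IsDartChain d.2 L w

section DartChain

variable {V : Type*} {u w : V} {L : List (V × V)}

theorem isDartChain_append {L₁ L₂ : List (V × V)} :
    IsDartChain u (L₁ ++ L₂) w ↔ ∃ z, IsDartChain u L₁ z ∧ IsDartChain z L₂ w := by
  induction L₁ generalizing u with
  | nil => exact ⟨fun h => ⟨u, rfl, h⟩, fun ⟨_, hu, h⟩ => hu ▸ h⟩
  | cons d L₁ ih =>
    simp only [List.cons_append, IsDartChain, ih]
    exact ⟨fun ⟨hd, z, h₁, h₂⟩ => ⟨z, ⟨hd, h₁⟩, h₂⟩, fun ⟨z, ⟨hd, h₁⟩, h₂⟩ => ⟨hd, z, h₁, h₂⟩⟩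

theorem IsDartChain.fst_mem (h : IsDartChain u L w) {d : V × V} (hd : d ∈ L) :
    d.1 ∈ u :: L.map Prod.snd := by
  induction L generalizing u with
  | nil => simp at hd
  | cons e L ih =>
    obtain ⟨rfl, h⟩ := h
    rcases List.mem_cons.1 hd with rfl | hd
    · exact List.mem_cons_self
    · exact List.mem_cons_of_mem _ (ih h hd)

theorem IsDartChain.end_mem (h : IsDartChain u L w) : w ∈ u :: L.map Prod.snd := by
  induction L generalizing u with
  | nil => exact h ▸ List.mem_cons_self
  | cons e L ih => exact List.mem_cons_of_mem _ (ih h.2)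

theorem IsDartChain.sum_map_sub {G : Type*} [AddCommGroup G] (h : IsDartChain u L w)
    (f : V → G) : (L.map fun d => f d.2 - f d.1).sum = f w - f u := by
  induction L generalizing u with
  | nil => simp [show u = w from h]
  | cons d L ih =>
    obtain ⟨rfl, h⟩ := h
    rw [List.map_cons, List.sum_cons, ih h]
    abel

end DartChain

theorem SimpleGraph.Walk.isDartChain_darts {V : Type*} {G : SimpleGraph V} {u w : V}
    (p : G.Walk u w) : IsDartChain u (p.darts.map Dart.toProd) w := by
  induction p with
  | nil => rfl
  | cons _ _ ih => exact ⟨rfl, ih⟩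

theorem List.exists_eq_append_cons_of_cons_sublist {α : Type*} {a : α} {l L : List α}
    (h : (a :: l).Sublist L) : ∃ A B, L = A ++ a :: B ∧ l.Sublist B := by
  obtain ⟨r₁, r₂, rfl, ha, hl⟩ := List.cons_sublist_iff.1 h
  obtain ⟨A, B, rfl⟩ := List.append_of_mem ha
  exact ⟨A, B ++ r₂, by simp, hl.trans (List.sublist_append_right _ _)⟩

theorem List.pairwise_gt_of_forall_le_headI {α : Type*} [LinearOrder α] [Inhabited α]
    {l : List α} (hnd : l.Nodup) (hmax : ∀ y ∈ l, y ≤ l.headI)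
    (h312 : ∀ x y z, [x, y, z].Sublist l → y < z → z < x → False) : l.Pairwise (· > ·) := by
  rcases l with _ | ⟨x, t⟩
  · exact List.Pairwise.nil
  obtain ⟨hx, hnd⟩ := List.nodup_cons.1 hnd
  have hlt : ∀ y ∈ t, y < x := fun y hy =>
    lt_of_le_of_ne (hmax y (List.mem_cons_of_mem _ hy)) fun h => hx (h ▸ hy)
  refine List.pairwise_cons.2 ⟨hlt, List.pairwise_iff_forall_sublist.2 fun {b c} hbc => ?_⟩
  rcases lt_trichotomy c b with h | rfl | h
  · exact h
  · exact absurd (hbc.nodup hnd) (by simp)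
  · exact (h312 x b c (hbc.cons_cons x) h (hlt c (hbc.subset (by simp)))).elim

def IsUnitStep (d : (ℤ × ℤ) × (ℤ × ℤ)) : Prop :=
  (d.1.2 = d.2.2 ∧ (d.2.1 = d.1.1 + 1 ∨ d.1.1 = d.2.1 + 1)) ∨
    (d.1.1 = d.2.1 ∧ (d.2.2 = d.1.2 + 1 ∨ d.1.2 = d.2.2 + 1))

/-- `d` is a vertical unit step crossing the leftward horizontal ray from the dual point
`(z.1 - 1/2, z.2 + 1/2)`. -/
def CrossesRay (z : ℤ × ℤ) (d : (ℤ × ℤ) × (ℤ × ℤ)) : Prop :=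
  d.1.1 = d.2.1 ∧ d.1.1 < z.1 ∧
    (d.1.2 = z.2 ∧ d.2.2 = z.2 + 1 ∨ d.2.2 = z.2 ∧ d.1.2 = z.2 + 1)

instance (z : ℤ × ℤ) : DecidablePred (CrossesRay z) := fun _ =>
  inferInstanceAs (Decidable (_ ∧ _ ∧ _))

def rayParity (J : List ((ℤ × ℤ) × (ℤ × ℤ))) (z : ℤ × ℤ) : ZMod 2 :=
  (J.map fun d => if CrossesRay z d then 1 else 0).sum

section RayParity

variable {J : List ((ℤ × ℤ) × (ℤ × ℤ))} {z : ℤ × ℤ}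

theorem rayParity_append (K : List ((ℤ × ℤ) × (ℤ × ℤ))) :
    rayParity (J ++ K) z = rayParity J z + rayParity K z := by
  simp [rayParity]

theorem rayParity_cons (d : (ℤ × ℤ) × (ℤ × ℤ)) :
    rayParity (d :: J) z = (if CrossesRay z d then 1 else 0) + rayParity J z := by
  simp [rayParity]

theorem rayParity_eq_zero_of_le (h : ∀ d ∈ J, z.1 ≤ d.1.1) : rayParity J z = 0 := by
  refine List.sum_eq_zero fun x hx => ?_
  obtain ⟨d, hd, rfl⟩ := List.mem_map.1 hx
  have := h d hd
  rw [if_neg (by unfold CrossesRay; omega)]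

theorem crossesRay_succ_fst_iff {d : (ℤ × ℤ) × (ℤ × ℤ)} (h₁ : d.1 ≠ z) (h₂ : d.2 ≠ z) :
    CrossesRay (z.1 + 1, z.2) d ↔ CrossesRay z d := by
  obtain ⟨⟨c, h⟩, ⟨c', h'⟩⟩ := d
  simp only [ne_eq, Prod.ext_iff] at h₁ h₂
  simp only [CrossesRay]
  omega

theorem rayParity_succ_fst (hJ : ∀ d ∈ J, d.1 ≠ z ∧ d.2 ≠ z) :
    rayParity J (z.1 + 1, z.2) = rayParity J z := by
  refine congrArg List.sum (List.map_congr_left fun d hd => ?_)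
  rw [if_congr (crossesRay_succ_fst_iff (hJ d hd).1 (hJ d hd).2) rfl rfl]

/-- A unit step not touching `(z.1, z.2 + 1)` crosses the ray from that point or the ray from `z`
exactly when it enters or leaves the segment of row `z.2 + 1` to the left of `z`. -/
theorem crossesRay_succ_snd {d : (ℤ × ℤ) × (ℤ × ℤ)} (hd : IsUnitStep d)
    (h₁ : d.1 ≠ (z.1, z.2 + 1)) (h₂ : d.2 ≠ (z.1, z.2 + 1)) :
    (if CrossesRay (z.1, z.2 + 1) d then 1 else 0 : ZMod 2) =
      (if CrossesRay z d then 1 else 0) +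
        ((if d.2.2 = z.2 + 1 ∧ d.2.1 < z.1 then 1 else 0) -
          (if d.1.2 = z.2 + 1 ∧ d.1.1 < z.1 then 1 else 0)) := by
  obtain ⟨⟨c, h⟩, ⟨c', h'⟩⟩ := d
  simp only [ne_eq, Prod.ext_iff] at h₁ h₂
  simp only [IsUnitStep] at hd
  split_ifs <;> simp only [CrossesRay] at * <;> first | omega | decide

theorem rayParity_succ_snd {u : ℤ × ℤ} (hJ : IsDartChain u J u) (hJu : ∀ d ∈ J, IsUnitStep d)
    (hz : ∀ d ∈ J, d.1 ≠ (z.1, z.2 + 1) ∧ d.2 ≠ (z.1, z.2 + 1)) :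
    rayParity J (z.1, z.2 + 1) = rayParity J z := by
  have hcycle := hJ.sum_map_sub fun w => if w.2 = z.2 + 1 ∧ w.1 < z.1 then (1 : ZMod 2) else 0
  rw [sub_self] at hcycle
  unfold rayParity
  rw [List.map_congr_left fun d hd => crossesRay_succ_snd (hJu d hd) (hz d hd).1 (hz d hd).2,
    List.sum_map_add, hcycle, add_zero]

theorem rayParity_eq_of_isUnitStep {u : ℤ × ℤ} (hJ : IsDartChain u J u)
    (hJu : ∀ d ∈ J, IsUnitStep d) {e : (ℤ × ℤ) × (ℤ × ℤ)} (he : IsUnitStep e)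
    (h₁ : ∀ d ∈ J, d.1 ≠ e.1 ∧ d.2 ≠ e.1) (h₂ : ∀ d ∈ J, d.1 ≠ e.2 ∧ d.2 ≠ e.2) :
    rayParity J e.1 = rayParity J e.2 := by
  obtain ⟨⟨c, h⟩, ⟨c', h'⟩⟩ := e
  simp only [IsUnitStep] at he
  dsimp only at h₁ h₂ ⊢
  rcases he with ⟨rfl, rfl | rfl⟩ | ⟨rfl, rfl | rfl⟩
  · exact (rayParity_succ_fst (z := (c, h)) h₁).symm
  · exact rayParity_succ_fst (z := (c', h)) h₂
  · exact (rayParity_succ_snd (z := (c, h)) hJ hJu h₂).symm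
  · exact rayParity_succ_snd (z := (c, h')) hJ hJu h₁

theorem IsDartChain.rayParity_eq {B : List ((ℤ × ℤ) × (ℤ × ℤ))} {v w : ℤ × ℤ}
    (hB : IsDartChain v B w) {u : ℤ × ℤ} (hJ : IsDartChain u J u)
    (hJu : ∀ d ∈ J, IsUnitStep d) (hBu : ∀ e ∈ B, IsUnitStep e)
    (havoid : ∀ x ∈ v :: B.map Prod.snd, ∀ d ∈ J, d.1 ≠ x ∧ d.2 ≠ x) :
    rayParity J v = rayParity J w := by
  induction B generalizing v with
  | nil => rw [show v = w from hB]
  | cons e B ih =>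
    obtain ⟨rfl, hB⟩ := hB
    have havoid' : ∀ x ∈ e.2 :: B.map Prod.snd, ∀ d ∈ J, d.1 ≠ x ∧ d.2 ≠ x :=
      fun x hx => havoid x (List.mem_cons_of_mem _ hx)
    rw [rayParity_eq_of_isUnitStep hJ hJu (hBu e List.mem_cons_self) (havoid _ List.mem_cons_self)
        (havoid' _ List.mem_cons_self)]
    exact ih hB (fun d hd => hBu d (List.mem_cons_of_mem _ hd)) havoid'

end RayParity

def columnPath (c : ℤ) : ℤ → ℕ → List ((ℤ × ℤ) × (ℤ × ℤ))
  | _, 0 => []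
  | u, s + 1 => ((c, u), (c, u + 1)) :: columnPath c (u + 1) s

section ColumnPath

variable (c : ℤ) (s : ℕ)

theorem isDartChain_columnPath (u : ℤ) : IsDartChain (c, u) (columnPath c u s) (c, u + s) := by
  induction s generalizing u with
  | zero => simp [columnPath, IsDartChain]
  | succ s ih =>
    refine ⟨rfl, ?_⟩
    convert ih (u + 1) using 2
    push_cast
    ring

theorem isUnitStep_and_onColumn_of_mem_columnPath {u : ℤ} {d : (ℤ × ℤ) × (ℤ × ℤ)}
    (hd : d ∈ columnPath c u s) : IsUnitStep d ∧ d.1.1 = c ∧ d.2.1 = c := by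
  induction s generalizing u with
  | zero => simp [columnPath] at hd
  | succ s ih =>
    rcases List.mem_cons.1 hd with rfl | hd
    · exact ⟨Or.inr ⟨rfl, Or.inl rfl⟩, rfl, rfl⟩
    · exact ih hd

theorem rayParity_columnPath {z : ℤ × ℤ} (hc : c < z.1) (u : ℤ) :
    rayParity (columnPath c u s) z = if u ≤ z.2 ∧ z.2 < u + s then 1 else 0 := by
  induction s generalizing u with
  | zero => simp only [columnPath, rayParity, List.map_nil, List.sum_nil]; rw [if_neg (by omega)]
  | succ s ih =>
    rw [columnPath, rayParity_cons, ih]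
    split_ifs <;> simp only [CrossesRay, true_and] at * <;> first | omega | decide

end ColumnPath

def closeAlongColumn (a β : ℤ) (s : ℕ) (P : List ((ℤ × ℤ) × (ℤ × ℤ))) :
    List ((ℤ × ℤ) × (ℤ × ℤ)) :=
  ((a - 1, β + s), (a, β + s)) :: (P ++ ((a, β), (a - 1, β)) :: columnPath (a - 1) β s)

section CloseAlongColumn

variable {a β : ℤ} {s : ℕ} {P : List ((ℤ × ℤ) × (ℤ × ℤ))}

theorem isDartChain_closeAlongColumn (hP : IsDartChain (a, β + s) P (a, β)) :
    IsDartChain (a - 1, β + s) (closeAlongColumn a β s P) (a - 1, β + s) :=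
  ⟨rfl, isDartChain_append.2 ⟨(a, β), hP, rfl, isDartChain_columnPath (a - 1) s β⟩⟩

theorem isUnitStep_of_mem_closeAlongColumn (hPu : ∀ d ∈ P, IsUnitStep d) :
    ∀ d ∈ closeAlongColumn a β s P, IsUnitStep d := by
  simp only [closeAlongColumn, List.mem_cons, List.mem_append]
  rintro d (rfl | hd | rfl | hd)
  · exact Or.inl ⟨rfl, Or.inl (sub_add_cancel a 1).symm⟩
  · exact hPu d hd
  · exact Or.inl ⟨rfl, Or.inr (sub_add_cancel a 1).symm⟩
  · exact (isUnitStep_and_onColumn_of_mem_columnPath _ _ hd).1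

theorem mem_or_eq_of_mem_closeAlongColumn (hP : IsDartChain (a, β + s) P (a, β))
    {d : (ℤ × ℤ) × (ℤ × ℤ)} (hd : d ∈ closeAlongColumn a β s P) {x : ℤ × ℤ}
    (hx : d.1 = x ∨ d.2 = x) : x ∈ (a, β + s) :: P.map Prod.snd ∨ x.1 = a - 1 := by
  simp only [closeAlongColumn, List.mem_cons, List.mem_append] at hd
  rcases hd with rfl | hd | rfl | hd <;> rcases hx with rfl | rfl
  · exact Or.inr rfl
  · exact Or.inl List.mem_cons_self
  · exact Or.inl (hP.fst_mem hd)
  · exact Or.inl (List.mem_cons_of_mem _ (List.mem_map_of_mem hd))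
  · exact Or.inl hP.end_mem
  · exact Or.inr rfl
  · exact Or.inr (isUnitStep_and_onColumn_of_mem_columnPath _ _ hd).2.1
  · exact Or.inr (isUnitStep_and_onColumn_of_mem_columnPath _ _ hd).2.2

theorem rayParity_closeAlongColumn (hP : IsDartChain (a, β + s) P (a, β))
    (hPx : ∀ z ∈ P.map Prod.snd, a ≤ z.1) (m : ℤ) :
    rayParity (closeAlongColumn a β s P) (a, m) = if β ≤ m ∧ m < β + s then 1 else 0 := by
  have hPx' : ∀ d ∈ P, a ≤ d.1.1 := fun d hd => by
    rcases List.mem_cons.1 (hP.fst_mem hd) with h | h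
    · rw [h]
    · exact hPx _ h
  rw [closeAlongColumn, rayParity_cons, rayParity_append, rayParity_cons,
    rayParity_columnPath _ _ (show a - 1 < (a, m).1 by simp), rayParity_eq_zero_of_le hPx',
    if_neg (by simp [CrossesRay]), if_neg (by simp [CrossesRay]), zero_add, zero_add, zero_add]

end CloseAlongColumn

theorem not_lt_of_disjoint_paths {a y β γ : ℤ} {P Q : List ((ℤ × ℤ) × (ℤ × ℤ))}
    (hP : IsDartChain (a, y - 1) P (a, β)) (hQ : IsDartChain (a, β - 1) Q (a, γ - 1))
    (hPu : ∀ d ∈ P, IsUnitStep d) (hQu : ∀ d ∈ Q, IsUnitStep d)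
    (hPx : ∀ z ∈ P.map Prod.snd, a ≤ z.1) (hQx : ∀ z ∈ Q.map Prod.snd, a ≤ z.1)
    (hPQ : ((a, y - 1) :: P.map Prod.snd).Disjoint ((a, β - 1) :: Q.map Prod.snd)) :
    ¬ (β < γ ∧ γ < y) := by
  rintro ⟨hβγ, hγy⟩
  obtain ⟨s, hs⟩ : ∃ s : ℕ, y - 1 = β + s := ⟨(y - 1 - β).toNat, by omega⟩
  rw [hs] at hP hPQ
  have hQv : ∀ x ∈ (a, β - 1) :: Q.map Prod.snd, a ≤ x.1 := by simpa using hQx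
  have havoid : ∀ x ∈ (a, β - 1) :: Q.map Prod.snd, ∀ d ∈ closeAlongColumn a β s P,
      d.1 ≠ x ∧ d.2 ≠ x := by
    refine fun x hx d hd => not_or.1 fun hdx => ?_
    rcases mem_or_eq_of_mem_closeAlongColumn hP hd hdx with hxP | hxcol
    · exact hPQ hxP hx
    · have := hQv x hx
      omega
  have hpar := hQ.rayParity_eq (isDartChain_closeAlongColumn hP)
    (isUnitStep_of_mem_closeAlongColumn hPu) hQu havoid
  rw [rayParity_closeAlongColumn hP hPx, rayParity_closeAlongColumn hP hPx,
    if_neg (by omega), if_pos (by omega)] at hpar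
  exact zero_ne_one hpar

theorem not_lt_of_sublist_of_isDartChain {u w : ℤ × ℤ} {L : List ((ℤ × ℤ) × (ℤ × ℤ))}
    {a y β γ : ℤ} (hL : IsDartChain u L w) (hnodup : (L.map Prod.snd).Nodup)
    (hLu : ∀ d ∈ L, IsUnitStep d) (hLx : ∀ z ∈ L.map Prod.snd, a ≤ z.1)
    (hsub : [((a, y), (a, y - 1)), ((a, β), (a, β - 1)), ((a, γ), (a, γ - 1))].Sublist L) :
    ¬ (β < γ ∧ γ < y) := by
  obtain ⟨A, R, hLR, hR⟩ := List.exists_eq_append_cons_of_cons_sublist hsub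
  obtain ⟨B, R', rfl, hR'⟩ := List.exists_eq_append_cons_of_cons_sublist hR
  obtain ⟨C, E, rfl, -⟩ := List.exists_eq_append_cons_of_cons_sublist hR'
  obtain ⟨_, -, rfl, hR⟩ := isDartChain_append.1 (hLR ▸ hL)
  obtain ⟨_, hB, rfl, hR'⟩ := isDartChain_append.1 hR
  obtain ⟨_, hC, rfl, -⟩ := isDartChain_append.1 hR'
  have hBL : B ⊆ L := fun d hd => by simp [hLR, hd]
  have hCL : C ++ [((a, γ), (a, γ - 1))] ⊆ L := fun d hd => by
    simp only [List.mem_append, List.mem_singleton] at hd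
    rcases hd with hd | rfl
    · simp [hLR, hd]
    · simp [hLR]
  have hQ : IsDartChain (a, β - 1) (C ++ [((a, γ), (a, γ - 1))]) (a, γ - 1) :=
    isDartChain_append.2 ⟨_, hC, rfl, rfl⟩
  have hsnd : ((a, y - 1) :: B.map Prod.snd ++
      (a, β - 1) :: (C ++ [((a, γ), (a, γ - 1))]).map Prod.snd).Sublist (L.map Prod.snd) := by
    simp [hLR]
  exact not_lt_of_disjoint_paths hB hQ
    (fun d hd => hLu d (hBL hd)) (fun d hd => hLu d (hCL hd))
    (fun z hz => hLx z (List.map_subset _ hBL hz)) (fun z hz => hLx z (List.map_subset _ hCL hz))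
    (List.disjoint_of_nodup_append (hsnd.nodup hnodup))

def columnStarts (a : ℤ) (L : List ((ℤ × ℤ) × (ℤ × ℤ))) : List ℤ :=
  (L.filter fun d => d.1.1 = a ∧ d.2.1 = a).map fun d => d.1.2

theorem IsDartChain.isChain_columnStarts {u w : ℤ × ℤ} {L : List ((ℤ × ℤ) × (ℤ × ℤ))} {a : ℤ}
    (hL : IsDartChain u L w) (hnodup : (L.map Prod.snd).Nodup)
    (hLu : ∀ d ∈ L, IsUnitStep d) (hLx : ∀ z ∈ L.map Prod.snd, a ≤ z.1)
    (hdown : ∀ d ∈ L, d.1.1 = a → d.2.1 = a → d.2.2 = d.1.2 - 1)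
    (hmax : ∀ y ∈ columnStarts a L, y ≤ (columnStarts a L).headI) :
    (columnStarts a L).IsChain (· > ·) := by
  set F := L.filter fun d => d.1.1 = a ∧ d.2.1 = a
  have hF : ∀ d ∈ F, d = ((a, d.1.2), (a, d.1.2 - 1)) := by
    intro d hd
    obtain ⟨hd, hda⟩ := List.mem_filter.1 hd
    simp only [decide_eq_true_eq] at hda
    exact Prod.ext (Prod.ext hda.1 rfl) (Prod.ext hda.2 (hdown d hd hda.1 hda.2))
  have hnodupF : (columnStarts a L).Nodup := by
    have h : (F.map Prod.snd).Nodup := (List.filter_sublist.map Prod.snd).nodup hnodup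
    rw [List.map_congr_left fun d hd => congrArg Prod.snd (hF d hd)] at h
    exact List.Nodup.of_map (fun y => (a, y - 1))
      (by simpa [columnStarts, F, Function.comp_def] using h)
  refine (List.pairwise_gt_of_forall_le_headI hnodupF hmax fun y β γ hsub hβγ hγy => ?_).isChain
  obtain ⟨l, hlF, hl⟩ := List.sublist_map_iff.1 hsub
  rcases l with _ | ⟨dk, _ | ⟨dk₁, _ | ⟨dj, _ | _⟩⟩⟩ <;>
    simp only [List.map_cons, List.map_nil, List.cons.injEq, reduceCtorEq, and_false] at hl
  obtain ⟨rfl, rfl, rfl, -⟩ := hl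
  rw [hF dk (hlF.subset (by simp)), hF dk₁ (hlF.subset (by simp)),
    hF dj (hlF.subset (by simp))] at hlF
  exact not_lt_of_sublist_of_isDartChain hL hnodup hLu hLx (hlF.trans List.filter_sublist)
    ⟨hβγ, hγy⟩

theorem Hitomezashi.isUnitStep_of_adj {ε η : ℤ → ZMod 2} {v w : ℤ × ℤ}
    (h : (Hitomezashi ε η).Adj v w) : IsUnitStep (v, w) := by
  obtain ⟨-, (⟨rfl, -⟩ | ⟨rfl, -⟩) | (⟨rfl, -⟩ | ⟨rfl, -⟩)⟩ := h <;> simp [IsUnitStep]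

/-- If a Hitomezashi loop with minimum x-coordinate `a` is oriented so that its edges
on `x = a` point downward, and the starting y-coordinate of the first traversed such
edge is the largest, then the starting y-coordinates are strictly decreasing in
traversal order. -/
theorem hitomezashi_loop_decreasing (ε η : ℤ → ZMod 2) (v : ℤ × ℤ)
    (p : (Hitomezashi ε η).Walk v v) (hp : p.IsCycle) (a : ℤ)
    (hmin : ∀ w ∈ p.support, a ≤ w.1)
    (ys : List ℤ)
    (hys : ys = (p.darts.filter (fun d => d.fst.1 = a ∧ d.snd.1 = a)).map (fun d => d.fst.2))
    (hdown : ∀ d ∈ p.darts, d.fst.1 = a → d.snd.1 = a → d.snd.2 = d.fst.2 - 1)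
    (hmax : ∀ y ∈ ys, y ≤ ys.headI) :
    ys.Chain' (· > ·) := by
  have hsnd : (p.darts.map SimpleGraph.Dart.toProd).map Prod.snd = p.support.tail := by
    rw [List.map_map, ← p.map_snd_darts]
    rfl
  have hys' : ys = columnStarts a (p.darts.map SimpleGraph.Dart.toProd) := by
    rw [hys, columnStarts, List.filter_map, List.map_map]
    rfl
  rw [hys'] at hmax ⊢
  refine p.isDartChain_darts.isChain_columnStarts (hsnd ▸ hp.support_nodup) ?_
    (fun z hz => hmin z (List.mem_of_mem_tail (hsnd ▸ hz))) ?_ hmax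
  · simp only [List.mem_map]
    rintro _ ⟨d, -, rfl⟩
    exact Hitomezashi.isUnitStep_of_adj d.adj
  · simp only [List.mem_map]
    rintro _ ⟨d, hd, rfl⟩
    exact hdown d hd
end

section
/- On a Hitomezashi loop, the y-coordinates of the starting vertices of all edges lying on a fixed vertical line x = a have the same parity. -/
theorem List.IsChain.and {α : Type*} {R S : α → α → Prop} {l : List α}
    (hR : l.IsChain R) (hS : l.IsChain S) : l.IsChain (fun a b => R a b ∧ S a b) := by
  induction l using List.twoStepInduction <;> grind

theorem List.IsChain.apply_eq_apply_of_mem {α β : Type*} {f : α → β} {l : List α}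
    (h : l.IsChain (fun a b => f a = f b)) {a b : α} (ha : a ∈ l) (hb : b ∈ l) : f a = f b :=
  (List.isChain_iff_pairwise.1 ((List.isChain_map f).2 h)).forall_of_forall (fun _ _ => rfl)
    (List.mem_map_of_mem ha) (List.mem_map_of_mem hb)

theorem SimpleGraph.Walk.IsTrail.isChain_darts {V : Type*} {G : SimpleGraph V} {u v : V}
    {p : G.Walk u v} (hp : p.IsTrail) :
    p.darts.IsChain (fun d d' => d.snd = d'.fst ∧ d.fst ≠ d'.snd) := by
  have hne : p.darts.IsChain (fun d d' : G.Dart => d.edge ≠ d'.edge) :=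
    (List.pairwise_map.1 hp.edges_nodup).isChain
  refine (p.isChain_dartAdj_darts.and hne).imp fun d d' ⟨hadj, hedge⟩ => ⟨hadj, fun h => hedge ?_⟩
  exact (SimpleGraph.dart_edge_eq_iff d d').2 (Or.inr (SimpleGraph.Dart.ext _ _ (Prod.ext h hadj)))

namespace Hitomezashi

variable {ε η : ℤ → ZMod 2} {u v w : ℤ × ℤ}

theorem adj_iff_s14 : (Hitomezashi ε η).Adj u v ↔
    v.2 = u.2 ∧ (v.1 = u.1 + 1 ∧ (u.1 : ZMod 2) = η u.2 ∨ v.1 + 1 = u.1 ∧ (v.1 : ZMod 2) = η u.2) ∨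
    v.1 = u.1 ∧ (v.2 = u.2 + 1 ∧ (u.2 : ZMod 2) = ε u.1 ∨ v.2 + 1 = u.2 ∧ (v.2 : ZMod 2) = ε u.1) := by
  obtain ⟨u₁, u₂⟩ := u
  obtain ⟨v₁, v₂⟩ := v
  simp only [Hitomezashi, SimpleGraph.fromRel_adj, ne_eq, Prod.ext_iff]
  grind

theorem adj_swap_iff : (Hitomezashi η ε).Adj u.swap v.swap ↔ (Hitomezashi ε η).Adj u v := by
  simp only [adj_iff_s14, Prod.fst_swap, Prod.snd_swap]
  tauto

theorem adj_cases (h : (Hitomezashi ε η).Adj u v) :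
    v.2 = u.2 ∧ (v.1 = u.1 + 1 ∨ v.1 + 1 = u.1) ∨ v.1 = u.1 ∧ (v.2 = u.2 + 1 ∨ v.2 + 1 = u.2) := by
  rw [adj_iff_s14] at h
  tauto

theorem eq_of_adj_of_snd_eq (hv : (Hitomezashi ε η).Adj u v) (hw : (Hitomezashi ε η).Adj u w)
    (hv₂ : v.2 = u.2) (hw₂ : w.2 = u.2) : v = w := by
  have horizontal : ∀ {x : ℤ × ℤ}, (Hitomezashi ε η).Adj u x → x.2 = u.2 →
      x.1 = u.1 + 1 ∧ (u.1 : ZMod 2) = η u.2 ∨ x.1 + 1 = u.1 ∧ (x.1 : ZMod 2) = η u.2 := by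
    intro x hx hx₂
    refine (adj_iff_s14.1 hx).resolve_right ?_ |>.2
    rintro ⟨-, ⟨h, -⟩ | ⟨h, -⟩⟩ <;> omega
  have parity {a b : ℤ} (ha : (a : ZMod 2) = η u.2) (hb : (b : ZMod 2) = η u.2) : a % 2 = b % 2 :=
    (ZMod.intCast_eq_intCast_iff' a b 2).1 (ha.trans hb.symm)
  refine Prod.ext ?_ (hv₂.trans hw₂.symm)
  rcases horizontal hv hv₂ with ⟨hv₁, hvη⟩ | ⟨hv₁, hvη⟩ <;>
    rcases horizontal hw hw₂ with ⟨hw₁, hwη⟩ | ⟨hw₁, hwη⟩ <;>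
    have := parity hvη hwη <;> omega

theorem eq_of_adj_of_fst_eq (hv : (Hitomezashi ε η).Adj u v) (hw : (Hitomezashi ε η).Adj u w)
    (hv₁ : v.1 = u.1) (hw₁ : w.1 = u.1) : v = w :=
  Prod.swap_injective <|
    eq_of_adj_of_snd_eq (adj_swap_iff.2 hv) (adj_swap_iff.2 hw) hv₁ hw₁

theorem modEq_of_adj_of_adj (h₁ : (Hitomezashi ε η).Adj v u) (h₂ : (Hitomezashi ε η).Adj u w)
    (hvw : v ≠ w) : v.2 + u.1 ≡ u.2 + w.1 [ZMOD 2] := by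
  rcases adj_cases h₁.symm with ⟨hv₂, hv₁⟩ | ⟨hv₁, hv₂⟩ <;>
    rcases adj_cases h₂ with ⟨hw₂, hw₁⟩ | ⟨hw₁, hw₂⟩
  · exact absurd (eq_of_adj_of_snd_eq h₁.symm h₂ hv₂ hw₂) hvw
  · rw [hv₂, hw₁]
  · unfold Int.ModEq
    omega
  · exact absurd (eq_of_adj_of_fst_eq h₁.symm h₂ hv₁ hw₁) hvw

theorem modEq_of_mem_darts {x y : ℤ × ℤ} {p : (Hitomezashi ε η).Walk x y} (hp : p.IsTrail)
    {d d' : (Hitomezashi ε η).Dart} (hd : d ∈ p.darts) (hd' : d' ∈ p.darts) :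
    d.fst.2 + d.snd.1 ≡ d'.fst.2 + d'.snd.1 [ZMOD 2] := by
  refine List.IsChain.apply_eq_apply_of_mem (f := fun e => (e.fst.2 + e.snd.1) % 2) ?_ hd hd'
  refine hp.isChain_darts.imp fun e e' ⟨hadj, hne⟩ => ?_
  show e.fst.2 + e.snd.1 ≡ e'.fst.2 + e'.snd.1 [ZMOD 2]
  rw [hadj]
  exact modEq_of_adj_of_adj (hadj ▸ e.adj) e'.adj hne

end Hitomezashi

/-- On a Hitomezashi loop, starting y-coordinates of all edges on a fixed vertical
line `x = a` have the same parity. -/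
theorem hitomezashi_loop_parity (ε η : ℤ → ZMod 2) (v : ℤ × ℤ)
    (p : (Hitomezashi ε η).Walk v v) (hp : p.IsCycle) (a : ℤ)
    (d d' : (Hitomezashi ε η).Dart) (hd : d ∈ p.darts) (hd' : d' ∈ p.darts)
    (hda : d.fst.1 = a ∧ d.snd.1 = a) (hd'a : d'.fst.1 = a ∧ d'.snd.1 = a) :
    d.fst.2 ≡ d'.fst.2 [ZMOD 2] := by
  have h := Hitomezashi.modEq_of_mem_darts hp.isTrail hd hd'
  rw [hda.2, hd'a.2] at h
  exact Int.ModEq.add_right_cancel' a h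
end
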